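/- Let i, j ∈ S with v(S) > v(S \ {i}) and v(S) > v(S \ {j}), and let (S \ {j}, y) be an objection of i against j at payoff vector x. If x_j − x_i ≤ p({j}) − p({i}) − Cost(S \ {i}) + Cost(S \ {j}), then there exists a counter-objection (Q, z) with Q = S \ {i} of j against i. -/
import Mathlib


/-- An objection of `i` against `j` at payoff vector `x`. -/
def IsObjection {ι : Type*} [DecidableEq ι] (v : Finset ι → ℝ) (x : ι → ℝ)
    (i j : ι) (P : Finset ι) (y : ι → ℝ) : Prop :=
  i ∈ P ∧ j ∉ P ∧ (∑ k ∈ P, y k) ≤ v P ∧ (∀ k ∈ P, x k ≤ y k) ∧ x i < y i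

/-- A counter-objection of `j` against the objection `(P, y)` of `i`. -/
def IsCounterObjection {ι : Type*} [DecidableEq ι] (v : Finset ι → ℝ) (x : ι → ℝ)
    (i j : ι) (P : Finset ι) (y : ι → ℝ) (Q : Finset ι) (z : ι → ℝ) : Prop :=
  j ∈ Q ∧ i ∉ Q ∧ (∑ k ∈ Q, z k) ≤ v Q ∧
    (∀ k ∈ Q \ P, x k ≤ z k) ∧ (∀ k ∈ Q ∩ P, y k ≤ z k)

/-- Lemma 2 of the paper: the inequality
`x_j − x_i ≤ p({j}) − p({i}) − Cost(S\{i}) + Cost(S\{j})` is a sufficient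
condition for the existence of a counter-objection `(S \ {i}, z)` of `j`
against `i` to any objection `(S \ {j}, y)` of `i` against `j`. -/
theorem counter_objection_sufficient_condition {ι : Type*} [DecidableEq ι]
    (S : Finset ι) (c : ι → ℝ) (Cost : Finset ι → ℝ)
    (x : ι → ℝ) (i j : ι) (hi : i ∈ S) (hj : j ∈ S) (hij : i ≠ j)
    (v : Finset ι → ℝ) (hv : ∀ C : Finset ι, v C = (∑ k ∈ C, c k) - Cost C)
    (hgapi : v (S.erase i) < v S)
    (hgapj : v (S.erase j) < v S)
    (y : ι → ℝ)
    (hobj : IsObjection v x i j (S.erase j) y)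
    (hcond : x j - x i ≤ c j - c i - Cost (S.erase i) + Cost (S.erase j)) :
    ∃ z : ι → ℝ, IsCounterObjection v x i j (S.erase j) y (S.erase i) z := by
  obtain ⟨hiP, hjP, hsum, hx, hxi⟩ := hobj
  have hjQ : j ∈ S.erase i := Finset.mem_erase.mpr ⟨hij.symm, hj⟩
  have hiP' : i ∈ S.erase j := Finset.mem_erase.mpr ⟨hij, hi⟩
  set T : ℝ := ∑ k ∈ (S.erase i).erase j, y k with hT
  refine ⟨fun k => if k = j then v (S.erase i) - T else y k, hjQ,
    Finset.notMem_erase i S, ?_, ?_, ?_⟩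
  · have hs : ∑ k ∈ S.erase i, (if k = j then v (S.erase i) - T else y k)
        = (v (S.erase i) - T) + T := by
      rw [← Finset.add_sum_erase _ _ hjQ, if_pos rfl]
      congr 1
      exact Finset.sum_congr rfl fun k hk => if_neg (Finset.ne_of_mem_erase hk)
    rw [hs]; ring_nf; exact le_refl _
  · intro k hk
    rw [Finset.mem_sdiff] at hk
    obtain ⟨hk1, hk2⟩ := hk
    have hkS : k ∈ S := Finset.mem_of_mem_erase hk1
    have hkj : k = j := by
      by_contra h
      exact hk2 (Finset.mem_erase.mpr ⟨h, hkS⟩)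
    rw [hkj]
    simp only [if_pos rfl, if_true]
    -- key inequality
    have hTsub : T = (∑ m ∈ S.erase j, y m) - y i := by
      rw [hT, Finset.erase_right_comm, Finset.sum_erase_eq_sub hiP']
    have hvv : v (S.erase i) - v (S.erase j) = c j - c i - Cost (S.erase i) + Cost (S.erase j) := by
      rw [hv, hv, Finset.sum_erase_eq_sub hi, Finset.sum_erase_eq_sub hj]
      ring
    have h1 : T ≤ v (S.erase j) - y i := by
      rw [hTsub]; linarith
    have h2 : x i < y i := hxi
    linarith [hcond, hvv, h1]
  · intro k hk
    rw [Finset.mem_inter] at hk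
    have : k ≠ j := (Finset.mem_erase.mp hk.2).1
    simp only [if_neg this, le_refl]
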